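/- Let X be a real Hilbert space, let A be a nonempty closed affine subspace of X with parallel subspace U := A − A, let B := {x ∈ X : ⟨x, v⟩ = β} be a hyperplane with ‖v‖ = 1, and let g := P_{B−A}(0). Suppose P_U(v) = 0 and let x ∈ X. If P_A(x) ∈ B, then g = 0, A ∩ B ≠ ∅, and P_{A∩B}(x) = P_A(x). -/
import Mathlib


open RealInnerProductSpace Pointwise

/-- The metric (nearest-point) projection onto a set `C` in a real inner product space:
`metricProj C x` is a point of `C` minimizing the distance to `x` (when such a point exists;
for a nonempty closed convex set in a Hilbert space it exists and is unique). -/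
noncomputable def metricProj {X : Type*} [NormedAddCommGroup X] [InnerProductSpace ℝ X]
    (C : Set X) (x : X) : X :=
  letI := Classical.dec (∃ p ∈ C, ∀ q ∈ C, ‖x - p‖ ≤ ‖x - q‖)
  if h : ∃ p ∈ C, ∀ q ∈ C, ‖x - p‖ ≤ ‖x - q‖ then h.choose else 0

lemma metricProj_spec {X : Type*} [NormedAddCommGroup X] [InnerProductSpace ℝ X]
    {C : Set X} {x : X} (h : ∃ p ∈ C, ∀ q ∈ C, ‖x - p‖ ≤ ‖x - q‖) :
    metricProj C x ∈ C ∧ ∀ q ∈ C, ‖x - metricProj C x‖ ≤ ‖x - q‖ := by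
  unfold metricProj
  rw [dif_pos h]
  exact ⟨h.choose_spec.1, h.choose_spec.2⟩

lemma metricProj_eq {X : Type*} [NormedAddCommGroup X] [InnerProductSpace ℝ X]
    {C : Set X} (hC : Convex ℝ C) {p x : X} (hp : p ∈ C)
    (hmin : ∀ q ∈ C, ‖x - p‖ ≤ ‖x - q‖) : metricProj C x = p := by
  obtain ⟨hmem, hmin'⟩ := metricProj_spec ⟨p, hp, hmin⟩
  set y := metricProj C x with hy
  have h1 : ‖x - y‖ ≤ ‖x - p‖ := hmin' p hp
  have h2 : ‖x - p‖ ≤ ‖x - y‖ := hmin y hmem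
  have hmmem : (1/2 : ℝ) • y + (1/2 : ℝ) • p ∈ C :=
    hC hmem hp (by norm_num) (by norm_num) (by norm_num)
  have h3 : ‖x - p‖ ≤ ‖x - ((1/2 : ℝ) • y + (1/2 : ℝ) • p)‖ := hmin _ hmmem
  have key := parallelogram_law_with_norm ℝ (x - y) (x - p)
  have hsum : (x - y) + (x - p) = (2 : ℝ) • (x - ((1/2 : ℝ) • y + (1/2 : ℝ) • p)) := by
    module
  have hdiff : (x - y) - (x - p) = p - y := by abel
  rw [hsum, hdiff, norm_smul] at key
  simp only [Real.norm_ofNat] at key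
  have hpy : ‖p - y‖ = 0 := by
    nlinarith [norm_nonneg (p - y), norm_nonneg (x - p), norm_nonneg (x - y),
      norm_nonneg (x - ((1/2 : ℝ) • y + (1/2 : ℝ) • p))]
  have := norm_eq_zero.mp hpy
  rw [sub_eq_zero] at this
  exact this.symm

lemma metricProj_exists {X : Type*} [NormedAddCommGroup X] [InnerProductSpace ℝ X]
    [CompleteSpace X] {C : Set X} (hne : C.Nonempty) (hc : IsClosed C) (hconv : Convex ℝ C)
    (x : X) : ∃ p ∈ C, ∀ q ∈ C, ‖x - p‖ ≤ ‖x - q‖ := by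
  obtain ⟨p, hp, hmin⟩ := exists_norm_eq_iInf_of_complete_convex hne hc.isComplete hconv x
  refine ⟨p, hp, fun q hq => ?_⟩
  rw [hmin]
  exact ciInf_le ⟨0, fun r ⟨w, hw⟩ => hw ▸ norm_nonneg _⟩ (⟨q, hq⟩ : C)

theorem gap_eq_zero_and_proj_inter_of_projDir_eq_zero_of_projA_mem
    {X : Type*} [NormedAddCommGroup X] [InnerProductSpace ℝ X] [CompleteSpace X]
    (A : AffineSubspace ℝ X) (hA : (A : Set X).Nonempty) (hAc : IsClosed (A : Set X))
    (v : X) (hv : ‖v‖ = 1) (β : ℝ) (B : Set X) (hB : B = {y : X | ⟪y, v⟫ = β})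
    (g : X) (hg : g = metricProj (B - (A : Set X)) 0)
    (hPU : metricProj (A.direction : Set X) v = 0)
    (x : X) (hx : metricProj (A : Set X) x ∈ B) :
    g = 0 ∧ ((A : Set X) ∩ B).Nonempty ∧
      metricProj ((A : Set X) ∩ B) x = metricProj (A : Set X) x := by
  have hAconv : Convex ℝ (A : Set X) := A.convex
  obtain ⟨hpA_mem, hpA_min⟩ := metricProj_spec (metricProj_exists hA hAc hAconv x)
  set pA := metricProj (A : Set X) x with hpA
  -- 0 ∈ B - A
  have h0 : (0 : X) ∈ B - (A : Set X) := ⟨pA, hx, pA, hpA_mem, sub_self pA⟩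
  have hg0 : g = 0 := by
    obtain ⟨hm, hmin⟩ := metricProj_spec
      (⟨0, h0, fun q _ => by simp⟩ : ∃ p ∈ B - (A : Set X), ∀ q ∈ B - (A : Set X),
        ‖(0 : X) - p‖ ≤ ‖(0 : X) - q‖)
    have := hmin 0 h0
    simp only [sub_zero, zero_sub, norm_neg, norm_zero] at this
    rw [hg]
    have := norm_le_zero_iff.mp this
    simpa using this
  have hBconv : Convex ℝ B := by
    rw [hB]
    have : {y : X | ⟪y, v⟫ = β} = {y : X | (innerSL ℝ v) y = β} := by
      ext y; simp [real_inner_comm]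
    rw [this]
    exact convex_hyperplane (innerSL ℝ v).toLinearMap.isLinear β
  refine ⟨hg0, ⟨pA, hpA_mem, hx⟩, ?_⟩
  exact metricProj_eq (hAconv.inter hBconv) ⟨hpA_mem, hx⟩ (fun q hq => hpA_min q hq.1)
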